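/- Let (P_μ)_{μ∈𝒫(E)} be a nonlinear Markov transition kernel family on a measurable space (E,ℰ) satisfying the global nonlinear Dobrushin condition with constant α ∈ (0,1] and the measure-Lipschitz condition with constant λ = α, and let π be its invariant measure. Then for every initial distribution μ₀ = μ ∈ 𝒫(E), the marginal laws μ_n satisfy d_TV(μ_n, π) ≤ 2/(λ n) for all positive integers n. -/

import Mathlib

open MeasureTheory ProbabilityTheory

/-- Total variation distance: `d_TV(μ,ν) = 2 ⨆_{A measurable} |μ(A) − ν(A)|`. -/
noncomputable def dTV {E : Type*} [MeasurableSpace E] (μ ν : Measure E) : ℝ :=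
  2 * ⨆ A : {A : Set E // MeasurableSet A}, |(μ A.1).toReal - (ν A.1).toReal|

section helpers
variable {E : Type*} [MeasurableSpace E]

lemma toReal_prob_le_one (μ : Measure E) [IsProbabilityMeasure μ] (A : Set E) :
    (μ A).toReal ≤ 1 := by
  have h : μ A ≤ 1 := prob_le_one
  simpa using ENNReal.toReal_mono (by simp) h

lemma abs_term_le_one (μ ν : Measure E) [IsProbabilityMeasure μ] [IsProbabilityMeasure ν]
    (A : Set E) : |(μ A).toReal - (ν A).toReal| ≤ 1 := by
  have h1 := toReal_prob_le_one μ A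
  have h2 := toReal_prob_le_one ν A
  have h3 : (0:ℝ) ≤ (μ A).toReal := ENNReal.toReal_nonneg
  have h4 : (0:ℝ) ≤ (ν A).toReal := ENNReal.toReal_nonneg
  rw [abs_sub_le_iff]; constructor <;> linarith

lemma bdd_dTV (μ ν : Measure E) [IsProbabilityMeasure μ] [IsProbabilityMeasure ν] :
    BddAbove (Set.range fun A : {A : Set E // MeasurableSet A} =>
      |(μ A.1).toReal - (ν A.1).toReal|) := by
  refine ⟨1, ?_⟩
  rintro _ ⟨A, rfl⟩
  exact abs_term_le_one μ ν A.1

lemma abs_le_dTV (μ ν : Measure E) [IsProbabilityMeasure μ] [IsProbabilityMeasure ν]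
    {A : Set E} (hA : MeasurableSet A) :
    |(μ A).toReal - (ν A).toReal| ≤ dTV μ ν / 2 := by
  have := le_ciSup (bdd_dTV μ ν) (⟨A, hA⟩ : {A : Set E // MeasurableSet A})
  rw [dTV]; linarith

lemma dTV_nonneg (μ ν : Measure E) : 0 ≤ dTV μ ν := by
  have : (0:ℝ) ≤ ⨆ A : {A : Set E // MeasurableSet A}, |(μ A.1).toReal - (ν A.1).toReal| :=
    Real.iSup_nonneg fun A => abs_nonneg _
  rw [dTV]; linarith

lemma dTV_le (μ ν : Measure E) {c : ℝ} (hc : 0 ≤ c)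
    (h : ∀ A : Set E, MeasurableSet A → |(μ A).toReal - (ν A).toReal| ≤ c) :
    dTV μ ν ≤ 2 * c := by
  rw [dTV]
  have : (⨆ A : {A : Set E // MeasurableSet A}, |(μ A.1).toReal - (ν A.1).toReal|) ≤ c :=
    Real.iSup_le (fun A => h A.1 A.2) hc
  linarith

lemma dTV_le_two (μ ν : Measure E) [IsProbabilityMeasure μ] [IsProbabilityMeasure ν] :
    dTV μ ν ≤ 2 := by
  simpa using dTV_le μ ν zero_le_one fun A _ => abs_term_le_one μ ν A

lemma toReal_split (μ : Measure E) [IsFiniteMeasure μ] (A : Set E) {S : Set E}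
    (hS : MeasurableSet S) :
    (μ A).toReal = (μ (A ∩ S)).toReal + (μ (A \ S)).toReal := by
  rw [← ENNReal.toReal_add (measure_ne_top _ _) (measure_ne_top _ _),
    measure_inter_add_diff A hS]

lemma prob_bind (ν : Measure E) [IsProbabilityMeasure ν] (K : Kernel E E) [IsMarkovKernel K] :
    IsProbabilityMeasure (ν.bind ⇑K) := by
  constructor
  rw [Measure.bind_apply MeasurableSet.univ (Kernel.measurable K).aemeasurable]
  simp

lemma contraction (Q R : Kernel E E) [IsMarkovKernel Q] [IsMarkovKernel R]
    (μ π : Measure E) [IsProbabilityMeasure μ] [IsProbabilityMeasure π]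
    (α lam : ℝ)
    (hcross : ∀ x y, dTV (Q x) (R y) ≤ 2 * (1 - α))
    (hlip : ∀ x, dTV (Q x) (R x) ≤ lam * dTV μ π) :
    dTV (μ.bind ⇑Q) (π.bind ⇑R) ≤
      lam * dTV μ π * (1 - dTV μ π / 2) + (1 - α) * dTV μ π := by
  obtain ⟨S, hS, hS1, hS2⟩ := hahn_decomposition (μ := μ) (ν := π)
  set s1 : ℝ := (μ S).toReal with hs1
  set p1 : ℝ := (π S).toReal with hp1
  have hπμS : π S ≤ μ S := hS1 S hS subset_rfl
  have hp1s1 : p1 ≤ s1 := ENNReal.toReal_mono (measure_ne_top _ _) hπμS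
  set m : ℝ := s1 - p1 with hmdef
  have hm0 : 0 ≤ m := by linarith
  -- value of dTV μ π
  have hsup_le : ∀ A : Set E, MeasurableSet A → |(μ A).toReal - (π A).toReal| ≤ m := by
    intro A hA
    have h1 := toReal_split μ A hS
    have h2 := toReal_split π A hS
    have h3 := toReal_split μ S (hA.compl)
    have h4 := toReal_split π S (hA.compl)
    -- S ∩ Aᶜ = S \ A
    have hSA : S ∩ Aᶜ = S \ A := rfl
    have h5 : π (S \ A) ≤ μ (S \ A) := hS1 _ (hS.diff hA) Set.diff_subset
    have h5' : (π (S \ A)).toReal ≤ (μ (S \ A)).toReal :=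
      ENNReal.toReal_mono (measure_ne_top _ _) h5
    have h6 : μ (A \ S) ≤ π (A \ S) := hS2 _ (hA.diff hS) (by
      intro x hx; exact hx.2)
    have h6' : (μ (A \ S)).toReal ≤ (π (A \ S)).toReal :=
      ENNReal.toReal_mono (measure_ne_top _ _) h6
    -- π(A∩S) ≤ μ(A∩S)
    have h7 : π (A ∩ S) ≤ μ (A ∩ S) := hS1 _ (hA.inter hS) Set.inter_subset_right
    have h7' : (π (A ∩ S)).toReal ≤ (μ (A ∩ S)).toReal :=
      ENNReal.toReal_mono (measure_ne_top _ _) h7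
    -- μ(Sᶜ∩Aᶜ) ≤ π(Sᶜ∩Aᶜ)  i.e. μ(Aᶜ \ S) etc; we need complement masses
    have hmuc : (μ Sᶜ).toReal = 1 - s1 := by
      rw [measure_compl hS (measure_ne_top _ _), measure_univ,
        ENNReal.toReal_sub_of_le prob_le_one (by simp)]
      simp [hs1]
    have hpic : (π Sᶜ).toReal = 1 - p1 := by
      rw [measure_compl hS (measure_ne_top _ _), measure_univ,
        ENNReal.toReal_sub_of_le prob_le_one (by simp)]
      simp [hp1]
    have h8 : μ (Sᶜ \ A) ≤ π (Sᶜ \ A) := hS2 _ (hS.compl.diff hA) Set.diff_subset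
    have h8' : (μ (Sᶜ \ A)).toReal ≤ (π (Sᶜ \ A)).toReal :=
      ENNReal.toReal_mono (measure_ne_top _ _) h8
    have h9 := toReal_split μ Sᶜ hA
    have h10 := toReal_split π Sᶜ hA
    -- Sᶜ ∩ A = A \ S
    have hcap : Sᶜ ∩ A = A \ S := by ext x; exact ⟨fun h => ⟨h.2, h.1⟩, fun h => ⟨h.2, h.1⟩⟩
    rw [hcap] at h9 h10
    rw [abs_sub_le_iff]
    constructor
    · -- μ A - π A ≤ m
      -- μ A - π A = (μ(A∩S)-π(A∩S)) + (μ(A\S)-π(A\S))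
      have hIC : S \ Aᶜ = A ∩ S := by
        rw [Set.diff_compl, Set.inter_comm]
      rw [hIC, hSA] at h3 h4
      linarith
    · -- π A - μ A ≤ m = (1-p1)-(1-s1)
      linarith
  have hsup_ge : m ≤ dTV μ π / 2 := by
    have := abs_le_dTV μ π hS
    have habs : |(μ S).toReal - (π S).toReal| = m := abs_of_nonneg hm0
    linarith [habs ▸ this]
  have hdval : dTV μ π = 2 * m := by
    have h1 : dTV μ π ≤ 2 * m := dTV_le μ π hm0 hsup_le
    linarith
  -- complement masses
  have hmuc : (μ Sᶜ).toReal = 1 - s1 := by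
    rw [measure_compl hS (measure_ne_top _ _), measure_univ,
      ENNReal.toReal_sub_of_le prob_le_one (by simp)]
    simp [hs1]
  have hpic : (π Sᶜ).toReal = 1 - p1 := by
    rw [measure_compl hS (measure_ne_top _ _), measure_univ,
      ENNReal.toReal_sub_of_le prob_le_one (by simp)]
    simp [hp1]
  -- measure decomposition
  have hresS : π.restrict S ≤ μ.restrict S := by
    rw [Measure.le_iff]; intro t ht
    rw [Measure.restrict_apply ht, Measure.restrict_apply ht]
    exact hS1 _ (ht.inter hS) Set.inter_subset_right
  have hresC : μ.restrict Sᶜ ≤ π.restrict Sᶜ := by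
    rw [Measure.le_iff]; intro t ht
    rw [Measure.restrict_apply ht, Measure.restrict_apply ht]
    exact hS2 _ (ht.inter hS.compl) Set.inter_subset_right
  set ρ : Measure E := μ.restrict S - π.restrict S with hρ
  set σ : Measure E := π.restrict Sᶜ - μ.restrict Sᶜ with hσ
  set η : Measure E := π.restrict S + μ.restrict Sᶜ with hη
  haveI : IsFiniteMeasure ρ := by rw [hρ]; infer_instance
  haveI : IsFiniteMeasure σ := by rw [hσ]; infer_instance
  haveI : IsFiniteMeasure η := by rw [hη]; infer_instance
  have haux1 : ρ + π.restrict S = μ.restrict S := by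
    rw [hρ]; exact Measure.sub_add_cancel_of_le hresS
  have haux2 : σ + μ.restrict Sᶜ = π.restrict Sᶜ := by
    rw [hσ]; exact Measure.sub_add_cancel_of_le hresC
  have hμdec : η + ρ = μ := by
    rw [hη, add_right_comm, add_comm (π.restrict S) ρ, haux1,
      Measure.restrict_add_restrict_compl hS]
  have hπdec : η + σ = π := by
    rw [hη, add_assoc, add_comm (μ.restrict Sᶜ) σ, haux2,
      Measure.restrict_add_restrict_compl hS]
  -- masses
  have hμcπc : μ Sᶜ ≤ π Sᶜ := hS2 Sᶜ hS.compl subset_rfl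
  have hρu : (ρ Set.univ).toReal = m := by
    rw [hρ, Measure.sub_apply MeasurableSet.univ hresS, Measure.restrict_apply_univ,
      Measure.restrict_apply_univ, ENNReal.toReal_sub_of_le hπμS (measure_ne_top _ _)]
  have hσu : (σ Set.univ).toReal = m := by
    rw [hσ, Measure.sub_apply MeasurableSet.univ hresC, Measure.restrict_apply_univ,
      Measure.restrict_apply_univ, ENNReal.toReal_sub_of_le hμcπc (measure_ne_top _ _),
      hpic, hmuc]
    ring
  have hηu : (η Set.univ).toReal = 1 - m := by
    rw [hη, Measure.add_apply, Measure.restrict_apply_univ, Measure.restrict_apply_univ,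
      ENNReal.toReal_add (measure_ne_top _ _) (measure_ne_top _ _), hmuc]
    rw [hmdef, hp1]
    ring
  set c : ℝ := lam * m * (1 - m) + (1 - α) * m with hc
  -- key estimate for each measurable set
  have key : ∀ A : Set E, MeasurableSet A →
      |((μ.bind ⇑Q) A).toReal - ((π.bind ⇑R) A).toReal| ≤ c := by
    intro A hA
    set q : E → ℝ := fun x => ((Q x) A).toReal with hq
    set r : E → ℝ := fun x => ((R x) A).toReal with hr
    have hqm : Measurable q := (Kernel.measurable_coe Q hA).ennreal_toReal
    have hrm : Measurable r := (Kernel.measurable_coe R hA).ennreal_toReal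
    have hqb : ∀ x, ‖q x‖ ≤ 1 := fun x => by
      rw [Real.norm_eq_abs, abs_of_nonneg ENNReal.toReal_nonneg]
      exact toReal_prob_le_one _ A
    have hrb : ∀ x, ‖r x‖ ≤ 1 := fun x => by
      rw [Real.norm_eq_abs, abs_of_nonneg ENNReal.toReal_nonneg]
      exact toReal_prob_le_one _ A
    have hqint : ∀ (ν : Measure E) [IsFiniteMeasure ν], Integrable q ν := fun ν _ =>
      ⟨hqm.aestronglyMeasurable, HasFiniteIntegral.of_bounded (ae_of_all _ hqb)⟩
    have hrint : ∀ (ν : Measure E) [IsFiniteMeasure ν], Integrable r ν := fun ν _ =>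
      ⟨hrm.aestronglyMeasurable, HasFiniteIntegral.of_bounded (ae_of_all _ hrb)⟩
    have hbindq : ((μ.bind ⇑Q) A).toReal = ∫ x, q x ∂μ := by
      rw [Measure.bind_apply hA (Kernel.measurable Q).aemeasurable]
      exact (integral_toReal ((Kernel.measurable_coe Q hA).aemeasurable)
        (ae_of_all _ fun x => lt_of_le_of_lt prob_le_one ENNReal.one_lt_top)).symm
    have hbindr : ((π.bind ⇑R) A).toReal = ∫ x, r x ∂π := by
      rw [Measure.bind_apply hA (Kernel.measurable R).aemeasurable]
      exact (integral_toReal ((Kernel.measurable_coe R hA).aemeasurable)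
        (ae_of_all _ fun x => lt_of_le_of_lt prob_le_one ENNReal.one_lt_top)).symm
    have hsplitq : ∫ x, q x ∂μ = (∫ x, q x ∂η) + ∫ x, q x ∂ρ := by
      rw [← hμdec]; exact integral_add_measure (hqint η) (hqint ρ)
    have hsplitr : ∫ x, r x ∂π = (∫ x, r x ∂η) + ∫ x, r x ∂σ := by
      rw [← hπdec]; exact integral_add_measure (hrint η) (hrint σ)
    -- η part
    have hpt : ∀ x, |q x - r x| ≤ lam * m := by
      intro x
      have h1 := abs_le_dTV (Q x) (R x) hA
      have h2 := hlip x
      calc |q x - r x| ≤ dTV (Q x) (R x) / 2 := h1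
        _ ≤ lam * dTV μ π / 2 := by linarith
        _ = lam * m := by rw [hdval]; ring
    have B1 : |(∫ x, q x ∂η) - ∫ x, r x ∂η| ≤ lam * m * (1 - m) := by
      rw [← integral_sub (hqint η) (hrint η)]
      have h := norm_integral_le_of_norm_le_const (μ := η) (f := fun x => q x - r x)
        (C := lam * m) (ae_of_all _ fun x => by rw [Real.norm_eq_abs]; exact hpt x)
      rw [measureReal_def, hηu] at h
      simpa [Real.norm_eq_abs] using h
    -- cross part
    have hptc : ∀ x y, |q x - r y| ≤ 1 - α := by
      intro x y
      have h1 := abs_le_dTV (Q x) (R y) hA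
      have h2 := hcross x y
      calc |q x - r y| ≤ dTV (Q x) (R y) / 2 := h1
        _ ≤ 1 - α := by linarith
    have B2 : |(∫ x, q x ∂ρ) - ∫ x, r x ∂σ| ≤ (1 - α) * m := by
      rcases eq_or_lt_of_le hm0 with hm | hm
      · have hρ0 : ρ = 0 := by
          rw [← Measure.measure_univ_eq_zero]
          have : (ρ Set.univ).toReal = 0 := by rw [hρu, ← hm]
          exact (ENNReal.toReal_eq_zero_iff _).mp this |>.resolve_right (measure_ne_top _ _)
        have hσ0 : σ = 0 := by
          rw [← Measure.measure_univ_eq_zero]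
          have : (σ Set.univ).toReal = 0 := by rw [hσu, ← hm]
          exact (ENNReal.toReal_eq_zero_iff _).mp this |>.resolve_right (measure_ne_top _ _)
        rw [hρ0, hσ0]
        simp [← hm]
      · have inner : ∀ y, |(∫ x, q x ∂ρ) - m * r y| ≤ (1 - α) * m := by
          intro y
          have h := norm_integral_le_of_norm_le_const (μ := ρ) (f := fun x => q x - r y)
            (C := 1 - α) (ae_of_all _ fun x => by rw [Real.norm_eq_abs]; exact hptc x y)
          rw [integral_sub (hqint ρ) (integrable_const _), integral_const, measureReal_def, hρu] at h
          simpa [Real.norm_eq_abs, smul_eq_mul] using h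
        have outer : |m * (∫ x, q x ∂ρ) - m * ∫ y, r y ∂σ| ≤ (1 - α) * m * m := by
          have h := norm_integral_le_of_norm_le_const (μ := σ)
            (f := fun y => (∫ x, q x ∂ρ) - m * r y) (C := (1 - α) * m)
            (ae_of_all _ fun y => by rw [Real.norm_eq_abs]; exact inner y)
          rw [integral_sub (integrable_const _) ((hrint σ).const_mul m), integral_const,
            integral_const_mul, measureReal_def, hσu] at h
          simpa [Real.norm_eq_abs, smul_eq_mul] using h
        have habs : |m * ((∫ x, q x ∂ρ) - ∫ x, r x ∂σ)| =
            m * |(∫ x, q x ∂ρ) - ∫ x, r x ∂σ| := by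
          rw [abs_mul, abs_of_pos hm]
        rw [mul_sub] at habs
        have := habs ▸ outer
        nlinarith [abs_nonneg ((∫ x, q x ∂ρ) - ∫ x, r x ∂σ)]
    rw [hbindq, hbindr, hsplitq, hsplitr, hc]
    calc |((∫ x, q x ∂η) + ∫ x, q x ∂ρ) - ((∫ x, r x ∂η) + ∫ x, r x ∂σ)|
        = |((∫ x, q x ∂η) - ∫ x, r x ∂η) + ((∫ x, q x ∂ρ) - ∫ x, r x ∂σ)| := by ring_nf
      _ ≤ |(∫ x, q x ∂η) - ∫ x, r x ∂η| + |(∫ x, q x ∂ρ) - ∫ x, r x ∂σ| := abs_add_le _ _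
      _ ≤ lam * m * (1 - m) + (1 - α) * m := add_le_add B1 B2
  have hc0 : 0 ≤ c := le_trans (abs_nonneg _) (key ∅ MeasurableSet.empty)
  have hfin := dTV_le (μ.bind ⇑Q) (π.bind ⇑R) hc0 key
  rw [hdval]
  calc dTV (μ.bind ⇑Q) (π.bind ⇑R) ≤ 2 * c := hfin
    _ = lam * (2 * m) * (1 - 2 * m / 2) + (1 - α) * (2 * m) := by rw [hc]; ring

end helpers


/-- Under the global nonlinear Dobrushin condition with constant `α ∈ (0,1]` and the
measure-Lipschitz condition with constant `lam = α`, the marginal laws satisfy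
`d_TV(μ_n, π) ≤ 2/(lam n)` for all positive integers `n`. -/
theorem stmt2 {E : Type*} [MeasurableSpace E]
    (P : Measure E → Kernel E E) (hMarkov : ∀ μ, IsMarkovKernel (P μ))
    (α lam : ℝ) (hα0 : 0 < α) (hα1 : α ≤ 1) (hlamα : lam = α)
    (hDobr : ∀ μ ν : Measure E, IsProbabilityMeasure μ → IsProbabilityMeasure ν →
      ∀ x y : E, dTV ((P μ) x) ((P ν) y) ≤ 2 * (1 - α))
    (hLip : ∀ μ ν : Measure E, IsProbabilityMeasure μ → IsProbabilityMeasure ν →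
      ∀ x : E, dTV ((P μ) x) ((P ν) x) ≤ lam * dTV μ ν)
    (π : Measure E) (hπ : IsProbabilityMeasure π) (hπinv : π.bind ⇑(P π) = π)
    (μ : Measure E) (hμ : IsProbabilityMeasure μ)
    (seq : ℕ → Measure E) (hseq0 : seq 0 = μ)
    (hseqS : ∀ n : ℕ, seq (n + 1) = (seq n).bind ⇑(P (seq n))) :
    ∀ n : ℕ, 0 < n → dTV (seq n) π ≤ 2 / (lam * n) := by
  subst hlamα
  haveI := hπ
  have hprob : ∀ n, IsProbabilityMeasure (seq n) := by
    intro n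
    induction n with
    | zero => rw [hseq0]; exact hμ
    | succ n ih =>
      rw [hseqS n]
      haveI := ih
      haveI := hMarkov (seq n)
      exact prob_bind _ _
  have hstep : ∀ n, dTV (seq (n+1)) π ≤
      dTV (seq n) π - (lam/2) * (dTV (seq n) π)^2 := by
    intro n
    haveI := hprob n
    haveI := hMarkov (seq n)
    haveI := hMarkov π
    have h := contraction (P (seq n)) (P π) (seq n) π lam lam
      (hDobr (seq n) π (hprob n) hπ) (hLip (seq n) π (hprob n) hπ)
    rw [hπinv] at h
    rw [hseqS n]
    calc dTV ((seq n).bind ⇑(P (seq n))) π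
        ≤ lam * dTV (seq n) π * (1 - dTV (seq n) π / 2) + (1 - lam) * dTV (seq n) π := h
      _ = dTV (seq n) π - (lam/2) * (dTV (seq n) π)^2 := by ring
  intro n hn
  induction n, hn using Nat.le_induction with
  | base =>
    haveI := hprob 1
    have h2 : dTV (seq 1) π ≤ 2 := dTV_le_two _ _
    have h3 : (2:ℝ) ≤ 2 / (lam * 1) := by
      rw [mul_one, le_div_iff₀ hα0]; linarith
    push_cast
    linarith
  | succ n hn ih =>
    haveI := hprob n
    set x := dTV (seq n) π with hxdef
    have hx0 : 0 ≤ x := dTV_nonneg _ _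
    have hx2 : x ≤ 2 := dTV_le_two _ _
    have hs := hstep n
    have hN1 : (1:ℝ) ≤ (n:ℝ) := by exact_mod_cast hn
    have hNpos : (0:ℝ) < lam * n := mul_pos hα0 (by linarith)
    have hxn : x * (lam * n) ≤ 2 := (le_div_iff₀ hNpos).mp ih
    have htarget : x - (lam/2) * x^2 ≤ 2 / (lam * ((n:ℝ)+1)) := by
      rw [le_div_iff₀ (by positivity)]
      rcases Nat.lt_or_ge n 2 with h1 | h1
      · have hn1 : n = 1 := by omega
        subst hn1
        push_cast at *
        nlinarith [sq_nonneg (lam * x - 1)]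
      · have hN2 : (2:ℝ) ≤ (n:ℝ) := by exact_mod_cast h1
        nlinarith [mul_nonneg (mul_nonneg (by linarith : (0:ℝ) ≤ (n:ℝ)+1)
            (by linarith : (0:ℝ) ≤ 2 - lam * n * x))
            (by nlinarith : (0:ℝ) ≤ 2 * (n:ℝ) - 2 - lam * n * x),
          sq_nonneg (n:ℝ), hN1]
    push_cast
    calc dTV (seq (n+1)) π ≤ x - (lam/2) * x^2 := hs
      _ ≤ 2 / (lam * ((n:ℝ)+1)) := htarget
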